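/- For any scaled Lorentz transformation A (i.e. A = s·B for some nonzero real s and Lorentz transformation B), there exists a unique tuple (s, v, O, ε₁, ε₂) with s > 0, v ∈ ℝ³ with |v| < 1, O ∈ SO(3,ℝ), and ε₁, ε₂ ∈ {−1, 1}, such that, setting γ = 1/√(1 − |v|²), A equals s times the 4×4 block matrix whose top-left 1×1 block is ε₁γ, top-right 1×3 block is ε₁γ·vᵀO, bottom-left 3×1 block is ε₂γ·v, and bottom-right 3×3 block is ε₂·(I₃ + (γ²/(1+γ))·v vᵀ)·O. -/

import Mathlib

/-- The Minkowski quadratic form on ℝ⁴: q(t,x,y,z) = x² + y² + z² − t². -/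
def mink (x : Fin 4 → ℝ) : ℝ := (x 1)^2 + (x 2)^2 + (x 3)^2 - (x 0)^2

/-- A real 4×4 matrix is a Lorentz transformation if it preserves the Minkowski form. -/
def IsLorentz (A : Matrix (Fin 4) (Fin 4) ℝ) : Prop :=
  ∀ x : Fin 4 → ℝ, mink (A.mulVec x) = mink x

/-- A scaled Lorentz transformation: a nonzero multiple of a Lorentz transformation. -/
def IsScaledLorentz (A : Matrix (Fin 4) (Fin 4) ℝ) : Prop :=
  ∃ s : ℝ, s ≠ 0 ∧ ∃ B : Matrix (Fin 4) (Fin 4) ℝ, IsLorentz B ∧ A = s • B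

/-- Membership in SO(3,ℝ). -/
def SO3 (O : Matrix (Fin 3) (Fin 3) ℝ) : Prop := O.transpose * O = 1 ∧ O.det = 1

/-- Squared Euclidean norm of a vector in ℝ³. -/
def sq3 (v : Fin 3 → ℝ) : ℝ := (v 0)^2 + (v 1)^2 + (v 2)^2

/-- The Lorentz factor γ = 1/√(1 − |v|²). -/
noncomputable def gam (v : Fin 3 → ℝ) : ℝ := 1 / Real.sqrt (1 - sq3 v)

/-- Build a 4×4 matrix from blocks of sizes 1 and 3. -/
def blk4 (a : Matrix (Fin 1) (Fin 1) ℝ) (b : Matrix (Fin 1) (Fin 3) ℝ)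
    (c : Matrix (Fin 3) (Fin 1) ℝ) (d : Matrix (Fin 3) (Fin 3) ℝ) :
    Matrix (Fin 4) (Fin 4) ℝ :=
  Matrix.reindex finSumFinEquiv finSumFinEquiv (Matrix.fromBlocks a b c d)

/-- The 4×4 matrix with top-left block ε₁γ, top-right block ε₁γ·vᵀO,
bottom-left block ε₂γ·v, and bottom-right block ε₂·(I₃ + (γ²/(1+γ))·v vᵀ)·O. -/
noncomputable def lorentzForm (e1 e2 : ℝ) (v : Fin 3 → ℝ) (O : Matrix (Fin 3) (Fin 3) ℝ) :
    Matrix (Fin 4) (Fin 4) ℝ :=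
  blk4 (Matrix.of fun _ _ => e1 * gam v)
       (Matrix.of fun _ j => e1 * gam v * Matrix.vecMul v O j)
       (Matrix.of fun i _ => e2 * gam v * v i)
       (e2 • ((1 + (gam v ^ 2 / (1 + gam v)) • Matrix.vecMulVec v v) * O))

open Matrix

lemma sq3_nonneg (v : Fin 3 → ℝ) : 0 ≤ sq3 v := by unfold sq3; positivity

lemma sq3_lt_one {v : Fin 3 → ℝ} (h : Real.sqrt (sq3 v) < 1) : sq3 v < 1 := by
  nlinarith [Real.sq_sqrt (sq3_nonneg v), Real.sqrt_nonneg (sq3 v)]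

lemma gam_ge_one {v : Fin 3 → ℝ} (h : sq3 v < 1) : 1 ≤ gam v := by
  unfold gam
  have h2 : 0 < Real.sqrt (1 - sq3 v) := Real.sqrt_pos.2 (by linarith)
  have h1 : Real.sqrt (1 - sq3 v) ≤ 1 := Real.sqrt_le_one.2 (by linarith [sq3_nonneg v])
  rw [le_div_iff₀ h2]; linarith

lemma gam_sq {v : Fin 3 → ℝ} (h : sq3 v < 1) : (gam v)^2 * (1 - sq3 v) = 1 := by
  unfold gam
  have h2 : (0:ℝ) < 1 - sq3 v := by linarith
  rw [div_pow, one_pow, Real.sq_sqrt h2.le]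
  field_simp

lemma gam_sq3 {v : Fin 3 → ℝ} (h : sq3 v < 1) : (gam v)^2 * sq3 v = (gam v)^2 - 1 := by
  linear_combination -(gam_sq h)

lemma W_mul_W (v : Fin 3 → ℝ) :
    vecMulVec v v * vecMulVec v v = sq3 v • vecMulVec v v := by
  ext i j
  simp [Matrix.mul_apply, vecMulVec_apply, Fin.sum_univ_three, sq3, Matrix.smul_apply]
  ring

lemma one_add_mul_one_add (v : Fin 3 → ℝ) (a b : ℝ) :
    (1 + a • vecMulVec v v) * (1 + b • vecMulVec v v)
      = 1 + (a + b + a*b*sq3 v) • vecMulVec v v := by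
  rw [add_mul, mul_add, mul_add, one_mul, mul_one, one_mul, smul_mul_smul_comm, W_mul_W]
  module

lemma det_one_add (v : Fin 3 → ℝ) (r : ℝ) :
    (1 + r • vecMulVec v v).det = 1 + r * sq3 v := by
  rw [det_fin_three]
  simp [Matrix.add_apply, Matrix.smul_apply, vecMulVec_apply, Matrix.one_apply, sq3]
  ring

lemma trace_W (v : Fin 3 → ℝ) : (vecMulVec v v).trace = sq3 v := by
  rw [trace_fin_three]; simp [vecMulVec_apply, sq3]; ring

lemma vecMul_W (v : Fin 3 → ℝ) : vecMul v (vecMulVec v v) = sq3 v • v := by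
  funext j
  simp [vecMul, dotProduct, vecMulVec_apply, Fin.sum_univ_three, sq3, Pi.smul_apply]
  ring

lemma vecMul_one_add (v : Fin 3 → ℝ) (r : ℝ) :
    vecMul v (1 + r • vecMulVec v v) = (1 + r * sq3 v) • v := by
  funext j
  fin_cases j <;>
    simp [vecMul, dotProduct, Matrix.add_apply, Matrix.smul_apply, vecMulVec_apply,
      Matrix.one_apply, Fin.sum_univ_three, sq3] <;> ring

lemma blk4_mul (a : Matrix (Fin 1) (Fin 1) ℝ) (b : Matrix (Fin 1) (Fin 3) ℝ)
    (c : Matrix (Fin 3) (Fin 1) ℝ) (d : Matrix (Fin 3) (Fin 3) ℝ)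
    (a' : Matrix (Fin 1) (Fin 1) ℝ) (b' : Matrix (Fin 1) (Fin 3) ℝ)
    (c' : Matrix (Fin 3) (Fin 1) ℝ) (d' : Matrix (Fin 3) (Fin 3) ℝ) :
    blk4 a b c d * blk4 a' b' c' d'
      = blk4 (a*a'+b*c') (a*b'+b*d') (c*a'+d*c') (c*b'+d*d') := by
  unfold blk4
  simp only [Matrix.reindex_apply]
  rw [Matrix.submatrix_mul_equiv _ _ _ finSumFinEquiv.symm _, Matrix.fromBlocks_multiply]

lemma blk4_transpose (a : Matrix (Fin 1) (Fin 1) ℝ) (b : Matrix (Fin 1) (Fin 3) ℝ)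
    (c : Matrix (Fin 3) (Fin 1) ℝ) (d : Matrix (Fin 3) (Fin 3) ℝ) :
    (blk4 a b c d)ᵀ = blk4 aᵀ cᵀ bᵀ dᵀ := by
  unfold blk4
  simp only [Matrix.reindex_apply, Matrix.transpose_submatrix, Matrix.fromBlocks_transpose]

lemma blk4_smul (s : ℝ) (a : Matrix (Fin 1) (Fin 1) ℝ) (b : Matrix (Fin 1) (Fin 3) ℝ)
    (c : Matrix (Fin 3) (Fin 1) ℝ) (d : Matrix (Fin 3) (Fin 3) ℝ) :
    s • blk4 a b c d = blk4 (s•a) (s•b) (s•c) (s•d) := by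
  unfold blk4
  rw [← Matrix.fromBlocks_smul]
  ext i j
  simp [Matrix.reindex_apply, Matrix.submatrix_apply, Matrix.smul_apply]

lemma blk4_inj {a a' : Matrix (Fin 1) (Fin 1) ℝ} {b b' : Matrix (Fin 1) (Fin 3) ℝ}
    {c c' : Matrix (Fin 3) (Fin 1) ℝ} {d d' : Matrix (Fin 3) (Fin 3) ℝ} :
    blk4 a b c d = blk4 a' b' c' d' ↔ a = a' ∧ b = b' ∧ c = c' ∧ d = d' := by
  unfold blk4
  rw [Equiv.apply_eq_iff_eq, Matrix.fromBlocks_inj]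

lemma blk4_one : blk4 1 0 0 1 = (1 : Matrix (Fin 4) (Fin 4) ℝ) := by
  unfold blk4
  rw [Matrix.fromBlocks_one]
  simp [Matrix.reindex_apply, Matrix.submatrix_one_equiv]

def fe4 : Fin 1 ⊕ Fin 3 ≃ Fin 4 := finSumFinEquiv

lemma blk4_eq (B : Matrix (Fin 4) (Fin 4) ℝ) :
    B = blk4 ((B.submatrix fe4 fe4).toBlocks₁₁)
             ((B.submatrix fe4 fe4).toBlocks₁₂)
             ((B.submatrix fe4 fe4).toBlocks₂₁)
             ((B.submatrix fe4 fe4).toBlocks₂₂) := by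
  unfold blk4 fe4
  rw [Matrix.fromBlocks_toBlocks]
  ext i j
  simp [Matrix.reindex_apply, Matrix.submatrix_apply]

def eta4 : Matrix (Fin 4) (Fin 4) ℝ :=
  !![-1,0,0,0; 0,1,0,0; 0,0,1,0; 0,0,0,1]

lemma eta4_blk : eta4 = blk4 (-1) 0 0 1 := by
  ext i j
  fin_cases i <;> fin_cases j <;> rfl

lemma eta4_mul_eta4 : eta4 * eta4 = 1 := by
  rw [eta4_blk, blk4_mul, ← blk4_one, blk4_inj]
  refine ⟨by simp, by simp, by simp, by simp⟩

def bil (x y : Fin 4 → ℝ) : ℝ := x 1 * y 1 + x 2 * y 2 + x 3 * y 3 - x 0 * y 0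

lemma lorentz_bil {B : Matrix (Fin 4) (Fin 4) ℝ} (hB : IsLorentz B) (x y : Fin 4 → ℝ) :
    bil (B.mulVec x) (B.mulVec y) = bil x y := by
  have h1 := hB (x + y)
  have h2 := hB x
  have h3 := hB y
  rw [Matrix.mulVec_add] at h1
  simp only [mink, bil, Pi.add_apply] at h1 h2 h3 ⊢
  linear_combination (h1 - h2 - h3)/2

lemma lorentz_eta {B : Matrix (Fin 4) (Fin 4) ℝ} (hB : IsLorentz B) :
    Bᵀ * eta4 * B = eta4 := by
  ext i j
  have h := lorentz_bil hB (Pi.single i 1) (Pi.single j 1)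
  simp only [Matrix.mulVec_single, mul_one] at h
  fin_cases i <;> fin_cases j <;>
    simp [bil, Pi.single_apply, Matrix.mul_apply, Fin.sum_univ_four, eta4,
      Matrix.transpose_apply, Matrix.vecHead, Matrix.vecTail] at h ⊢ <;> linarith [h]

lemma lorentz_eta' {B : Matrix (Fin 4) (Fin 4) ℝ} (hB : IsLorentz B) :
    B * eta4 * Bᵀ = eta4 := by
  have h := lorentz_eta hB
  have h1 : (eta4 * Bᵀ * eta4) * B = 1 := by
    calc (eta4 * Bᵀ * eta4) * B = eta4 * (Bᵀ * eta4 * B) := by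
          simp only [Matrix.mul_assoc]
      _ = eta4 * eta4 := by rw [h]
      _ = 1 := eta4_mul_eta4
  have h2 : B * (eta4 * Bᵀ * eta4) = 1 := mul_eq_one_comm.mp h1
  have h3 : B * eta4 * Bᵀ * eta4 * eta4 = 1 * eta4 := by
    rw [show B * eta4 * Bᵀ * eta4 = B * (eta4 * Bᵀ * eta4) by simp only [Matrix.mul_assoc], h2]
  rwa [Matrix.mul_assoc (B * eta4 * Bᵀ), eta4_mul_eta4, Matrix.mul_one, Matrix.one_mul] at h3

noncomputable def Pm (v : Fin 3 → ℝ) : Matrix (Fin 3) (Fin 3) ℝ :=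
  1 + (gam v ^ 2 / (1 + gam v)) • Matrix.vecMulVec v v

noncomputable def Qm (v : Fin 3 → ℝ) : Matrix (Fin 3) (Fin 3) ℝ :=
  1 + (-(gam v / (1 + gam v))) • Matrix.vecMulVec v v

section PQ
variable {v : Fin 3 → ℝ} (h : sq3 v < 1)

lemma gam_ne (h : sq3 v < 1) : gam v ≠ 0 := by have := gam_ge_one h; linarith
lemma gam_ne' (h : sq3 v < 1) : 1 + gam v ≠ 0 := by have := gam_ge_one h; linarith

lemma sq3_eq (h : sq3 v < 1) : sq3 v = (gam v^2 - 1)/gam v^2 := by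
  have h2 := gam_sq3 h
  have h3 := gam_ne h
  field_simp
  linear_combination h2

lemma Pm_mul_Qm (h : sq3 v < 1) : Pm v * Qm v = 1 := by
  unfold Pm Qm
  rw [one_add_mul_one_add]
  have hc : gam v ^ 2 / (1 + gam v) + -(gam v / (1 + gam v))
      + (gam v ^ 2 / (1 + gam v)) * (-(gam v / (1 + gam v))) * sq3 v = 0 := by
    rw [sq3_eq h]
    have h3 := gam_ne h
    have h4 := gam_ne' h
    field_simp
    ring
  rw [hc, zero_smul, add_zero]

lemma Qm_mul_Pm (h : sq3 v < 1) : Qm v * Pm v = 1 := by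
  unfold Pm Qm
  rw [one_add_mul_one_add]
  have hc : -(gam v / (1 + gam v)) + gam v ^ 2 / (1 + gam v)
      + (-(gam v / (1 + gam v))) * (gam v ^ 2 / (1 + gam v)) * sq3 v = 0 := by
    rw [sq3_eq h]
    have h3 := gam_ne h
    have h4 := gam_ne' h
    field_simp
    ring
  rw [hc, zero_smul, add_zero]

lemma Pm_mul_Pm (h : sq3 v < 1) : Pm v * Pm v = 1 + (gam v^2) • Matrix.vecMulVec v v := by
  unfold Pm
  rw [one_add_mul_one_add]
  congr 1
  congr 1
  rw [sq3_eq h]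
  have h3 := gam_ne h
  have h4 := gam_ne' h
  field_simp
  ring

lemma det_Pm (h : sq3 v < 1) : (Pm v).det = gam v := by
  unfold Pm
  rw [det_one_add, sq3_eq h]
  have h3 := gam_ne h
  have h4 := gam_ne' h
  field_simp
  ring

lemma det_Qm (h : sq3 v < 1) : (Qm v).det = 1 / gam v := by
  unfold Qm
  rw [det_one_add, sq3_eq h]
  have h3 := gam_ne h
  have h4 := gam_ne' h
  field_simp
  ring

lemma vecMul_Qm (h : sq3 v < 1) : Matrix.vecMul v (Qm v) = (1 / gam v) • v := by
  unfold Qm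
  rw [vecMul_one_add]
  congr 1
  rw [sq3_eq h]
  have h3 := gam_ne h
  have h4 := gam_ne' h
  field_simp
  ring

lemma W_symm (v : Fin 3 → ℝ) : (Matrix.vecMulVec v v)ᵀ = Matrix.vecMulVec v v := by
  ext i j; simp [Matrix.vecMulVec_apply, Matrix.transpose_apply]; ring

lemma Pm_symm (v : Fin 3 → ℝ) : (Pm v)ᵀ = Pm v := by
  unfold Pm
  rw [Matrix.transpose_add, Matrix.transpose_one, Matrix.transpose_smul, W_symm]

lemma Qm_symm (v : Fin 3 → ℝ) : (Qm v)ᵀ = Qm v := by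
  unfold Qm
  rw [Matrix.transpose_add, Matrix.transpose_one, Matrix.transpose_smul, W_symm]

end PQ

lemma vecMul_smulM (r : ℝ) (v : Fin 3 → ℝ) (M : Matrix (Fin 3) (Fin 3) ℝ) :
    Matrix.vecMul v (r • M) = r • Matrix.vecMul v M := by
  funext j
  simp [Matrix.vecMul, dotProduct, Matrix.smul_apply, Fin.sum_univ_three]
  ring

lemma transpose11 (m : Matrix (Fin 1) (Fin 1) ℝ) : mᵀ = m := by
  ext i j; fin_cases i; fin_cases j; rfl

lemma mul13 (m : Matrix (Fin 1) (Fin 1) ℝ) (b : Matrix (Fin 1) (Fin 3) ℝ) :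
    m * b = m 0 0 • b := by
  ext i j
  fin_cases i
  simp [Matrix.mul_apply, Fin.sum_univ_one, Matrix.smul_apply]

lemma c_mul_cT (c : Matrix (Fin 3) (Fin 1) ℝ) :
    c * cᵀ = Matrix.vecMulVec (fun i => c i 0) (fun i => c i 0) := by
  ext i j
  simp [Matrix.mul_apply, Fin.sum_univ_one, Matrix.vecMulVec_apply]

lemma cT_mul_d (c : Matrix (Fin 3) (Fin 1) ℝ) (d : Matrix (Fin 3) (Fin 3) ℝ) :
    cᵀ * d = Matrix.of fun _ j => Matrix.vecMul (fun i => c i 0) d j := by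
  ext i j
  fin_cases i
  simp [Matrix.mul_apply, Matrix.vecMul, dotProduct, Matrix.transpose_apply]

lemma lorentz_form_exists {B : Matrix (Fin 4) (Fin 4) ℝ} (hB : IsLorentz B) :
    ∃ v O e1 e2, Real.sqrt (sq3 v) < 1 ∧ SO3 O ∧ (e1 = (1:ℝ) ∨ e1 = -1) ∧
      (e2 = (1:ℝ) ∨ e2 = -1) ∧ B = lorentzForm e1 e2 v O := by
  classical
  obtain ⟨a, b, c, d, hB4⟩ : ∃ a b c d, B = blk4 a b c d := ⟨_, _, _, _, blk4_eq B⟩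
  have key : Bᵀ * eta4 * B = eta4 := lorentz_eta hB
  have key' : B * eta4 * Bᵀ = eta4 := lorentz_eta' hB
  rw [hB4, eta4_blk, blk4_transpose, blk4_mul, blk4_mul, blk4_inj] at key key'
  obtain ⟨k11, k12, -, -⟩ := key
  obtain ⟨-, -, -, k22'⟩ := key'
  simp only [Matrix.mul_zero, Matrix.zero_mul, Matrix.mul_one, Matrix.one_mul,
    add_zero, zero_add, mul_neg_one, Matrix.mul_neg, Matrix.neg_mul] at k11 k12 k22'
  -- k11 : -(aᵀ*a) + cᵀ*c = -1 ; k12 : -(aᵀ*b) + cᵀ*d = 0 ; k22' : -(c*cᵀ) + d*dᵀ = 1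
  set u : Fin 3 → ℝ := fun i => c i 0 with hu
  set α : ℝ := a 0 0 with hα
  have hq0 : 0 ≤ sq3 u := sq3_nonneg u
  have hαq : α^2 = 1 + sq3 u := by
    have h00 : (-(aᵀ*a) + cᵀ*c) 0 0 = (-1 : Matrix (Fin 1) (Fin 1) ℝ) 0 0 := by rw [k11]
    simp [Matrix.add_apply, Matrix.neg_apply, Matrix.mul_apply, Fin.sum_univ_one,
      Fin.sum_univ_three, Matrix.transpose_apply, Matrix.one_apply] at h00
    simp only [sq3, hu]
    linear_combination -h00
  obtain ⟨g, hg1, hg2, hαor⟩ : ∃ g, 1 ≤ g ∧ g^2 = 1 + sq3 u ∧ (α = g ∨ α = -g) := by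
    refine ⟨|α|, ?_, by rw [sq_abs]; exact hαq, ?_⟩
    · nlinarith [abs_nonneg α, sq_abs α]
    · rcases le_or_gt 0 α with h | h
      · exact Or.inl (abs_of_nonneg h).symm
      · exact Or.inr (by rw [abs_of_neg h]; ring)
  have hgpos : 0 < g := by linarith
  have hgne : g ≠ 0 := ne_of_gt hgpos
  obtain ⟨e1, he1or, hαe⟩ : ∃ e1, (e1 = (1:ℝ) ∨ e1 = -1) ∧ α = e1 * g := by
    rcases hαor with h | h
    · exact ⟨1, Or.inl rfl, by rw [h]; ring⟩
    · exact ⟨-1, Or.inr rfl, by rw [h]; ring⟩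
  have hα0 : α ≠ 0 := by rw [hαe]; rcases he1or with h | h <;> rw [h] <;> simp [hgne]
  -- d * dᵀ = 1 + u uᵀ
  have hdd : d * dᵀ = 1 + Matrix.vecMulVec u u := by
    rw [← c_mul_cT, ← k22']; abel
  have hdet2 : d.det^2 = g^2 := by
    have h1 : (d * dᵀ).det = (1 + Matrix.vecMulVec u u).det := by rw [hdd]
    rw [Matrix.det_mul, Matrix.det_transpose] at h1
    have h2 : (1 + Matrix.vecMulVec u u).det = 1 + sq3 u := by
      have := det_one_add u 1
      rwa [one_smul, one_mul] at this
    rw [h2] at h1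
    rw [hg2]; linear_combination h1
  obtain ⟨e2, he2or, hdetd⟩ : ∃ e2, (e2 = (1:ℝ) ∨ e2 = -1) ∧ d.det = e2 * g := by
    have hfac : (d.det - g) * (d.det + g) = 0 := by linear_combination hdet2
    rcases mul_eq_zero.mp hfac with h | h
    · exact ⟨1, Or.inl rfl, by linarith⟩
    · exact ⟨-1, Or.inr rfl, by linarith⟩
  have he2sq : e2^2 = 1 := by rcases he2or with h | h <;> rw [h] <;> norm_num
  have he1sq : e1^2 = 1 := by rcases he1or with h | h <;> rw [h] <;> norm_num
  set v : Fin 3 → ℝ := fun i => e2 * u i / g with hv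
  have huv : ∀ i, u i = e2 * g * v i := by
    intro i
    rw [hv]
    field_simp
    linear_combination (-(u i)) * he2sq
  have hq3 : sq3 v = sq3 u / g^2 := by
    simp only [sq3, hv, div_pow, mul_pow, he2sq, one_mul]
    ring
  have hq3lt : sq3 v < 1 := by
    rw [hq3, div_lt_one (by positivity)]
    nlinarith [hg2]
  have hsqrt : Real.sqrt (sq3 v) < 1 := by
    rw [show (1:ℝ) = Real.sqrt 1 by simp]
    exact Real.sqrt_lt_sqrt (sq3_nonneg v) (by simpa using hq3lt)
  have hgam : gam v = g := by
    unfold gam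
    have h1 : 1 - sq3 v = (1/g)^2 := by
      rw [hq3]
      field_simp
      linear_combination hg2
    rw [h1, Real.sqrt_sq (by positivity)]
    field_simp
  -- the W translation
  have hWuv : Matrix.vecMulVec u u = (g^2) • Matrix.vecMulVec v v := by
    ext i j
    simp only [Matrix.vecMulVec_apply, Matrix.smul_apply, smul_eq_mul]
    rw [huv i, huv j]
    linear_combination (g^2 * v i * v j) * he2sq
  have hddP : d * dᵀ = Pm v * Pm v := by
    rw [Pm_mul_Pm hq3lt, hgam, hdd, hWuv]
  -- define O
  set O : Matrix (Fin 3) (Fin 3) ℝ := e2 • (Qm v * d) with hO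
  have hQsym := Qm_symm v
  have hOOt : O * Oᵀ = 1 := by
    have hmid : Qm v * (d * dᵀ) * Qm v = 1 := by
      rw [hddP]
      calc Qm v * (Pm v * Pm v) * Qm v = (Qm v * Pm v) * (Pm v * Qm v) := by
            simp only [Matrix.mul_assoc]
        _ = 1 := by rw [Qm_mul_Pm hq3lt, Pm_mul_Qm hq3lt, one_mul]
    rw [hO, Matrix.transpose_smul, Matrix.transpose_mul, hQsym, smul_mul_assoc,
      mul_smul_comm, smul_smul, ← sq, he2sq, one_smul]
    calc Qm v * d * (dᵀ * Qm v) = Qm v * (d * dᵀ) * Qm v := by simp only [Matrix.mul_assoc]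
      _ = 1 := hmid
  have hOtO : Oᵀ * O = 1 := mul_eq_one_comm.mp hOOt
  have hdetO : O.det = 1 := by
    rw [hO, Matrix.det_smul, Matrix.det_mul, det_Qm hq3lt, hgam, hdetd]
    simp only [Fintype.card_fin]
    field_simp
    linear_combination (e2^2 + 1) * he2sq
  refine ⟨v, O, e1, e2, hsqrt, ⟨hOtO, hdetO⟩, he1or, he2or, ?_⟩
  rw [hB4]
  unfold lorentzForm
  rw [blk4_inj]
  refine ⟨?_, ?_, ?_, ?_⟩
  · ext i j
    fin_cases i; fin_cases j
    simp only [Matrix.of_apply, hgam]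
    exact hαe
  · -- b block
    have hab : aᵀ * b = cᵀ * d := neg_add_eq_zero.mp k12
    rw [transpose11, mul13, ← hα] at hab
    have hbeq : b = α⁻¹ • (cᵀ * d) := by rw [← hab, inv_smul_smul₀ hα0]
    have hvO : Matrix.vecMul v O = (e2 * (1/g)) • Matrix.vecMul v d := by
      rw [hO, vecMul_smulM, ← Matrix.vecMul_vecMul, vecMul_Qm hq3lt, hgam,
        Matrix.smul_vecMul, smul_smul]
    have huvv : u = (e2*g) • v := funext fun i => by
      rw [huv i]; simp [Pi.smul_apply]
    have hud : Matrix.vecMul u d = (e2*g) • Matrix.vecMul v d := by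
      rw [huvv, Matrix.smul_vecMul]
    rw [hbeq, cT_mul_d]
    ext i j
    fin_cases i
    simp only [Matrix.smul_apply, Matrix.of_apply, smul_eq_mul, hgam, hvO, hud, Pi.smul_apply]
    rw [show (fun i => c i 0) = u from rfl, hud, Pi.smul_apply, smul_eq_mul]
    rw [hαe]
    have he1ne : e1 ≠ 0 := by rcases he1or with h | h <;> rw [h] <;> norm_num
    field_simp
    linear_combination (-(e2*(Matrix.vecMul v d j))) * he1sq
  · ext i j
    fin_cases j
    simp only [Matrix.of_apply, hgam]
    exact huv i
  · show d = e2 • (Pm v * O)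
    rw [hO, mul_smul_comm, smul_smul, ← sq, he2sq, one_smul, ← Matrix.mul_assoc,
      Pm_mul_Qm hq3lt, one_mul]

lemma lorentz_form_unique
    {s s' e1 e1' e2 e2' : ℝ} {v v' : Fin 3 → ℝ} {O O' : Matrix (Fin 3) (Fin 3) ℝ}
    (hs : 0 < s) (hs' : 0 < s')
    (hv : Real.sqrt (sq3 v) < 1) (hv' : Real.sqrt (sq3 v') < 1)
    (hO : SO3 O) (hO' : SO3 O')
    (he1 : e1 = 1 ∨ e1 = -1) (he1' : e1' = 1 ∨ e1' = -1)
    (he2 : e2 = 1 ∨ e2 = -1) (he2' : e2' = 1 ∨ e2' = -1)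
    (heq : s • lorentzForm e1 e2 v O = s' • lorentzForm e1' e2' v' O') :
    s = s' ∧ v = v' ∧ O = O' ∧ e1 = e1' ∧ e2 = e2' := by
  have hq := sq3_lt_one hv
  have hq' := sq3_lt_one hv'
  have hg1 := gam_ge_one hq
  have hg1' := gam_ge_one hq'
  have hgq := gam_sq3 hq
  have hgq' := gam_sq3 hq'
  have he2sq : e2^2 = 1 := by rcases he2 with h|h <;> rw [h] <;> norm_num
  have he2sq' : e2'^2 = 1 := by rcases he2' with h|h <;> rw [h] <;> norm_num
  unfold lorentzForm at heq
  rw [blk4_smul, blk4_smul, blk4_inj] at heq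
  obtain ⟨E1, -, E3, E4⟩ := heq
  have E4' : (s*e2) • (Pm v * O) = (s'*e2') • (Pm v' * O') := by
    unfold Pm; rw [← smul_smul, ← smul_smul]; exact E4
  have u1 : s * (e1 * gam v) = s' * (e1' * gam v') := by
    have h := congrFun (congrFun E1 0) 0
    simpa only [Matrix.smul_apply, Matrix.of_apply, smul_eq_mul] using h
  have u3 : ∀ i, s * (e2 * gam v * v i) = s' * (e2' * gam v' * v' i) := by
    intro i
    have h := congrFun (congrFun E3 i) 0
    simpa only [Matrix.smul_apply, Matrix.of_apply, smul_eq_mul] using h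
  -- trace identity
  have htr : ∀ (t : ℝ) (w : Fin 3 → ℝ) (N : Matrix (Fin 3) (Fin 3) ℝ), sq3 w < 1 → SO3 N →
      Matrix.trace ((t • (Pm w * N)) * (t • (Pm w * N))ᵀ) = t^2 * (gam w^2 + 2) := by
    intro t w N hw hN
    have hNNt : N * Nᵀ = 1 := mul_eq_one_comm.mp hN.1
    rw [Matrix.transpose_smul, Matrix.transpose_mul, Pm_symm]
    rw [smul_mul_assoc, mul_smul_comm, smul_smul]
    have hmid : Pm w * N * (Nᵀ * Pm w) = 1 + gam w^2 • Matrix.vecMulVec w w := by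
      calc Pm w * N * (Nᵀ * Pm w) = Pm w * (N * Nᵀ) * Pm w := by simp only [Matrix.mul_assoc]
        _ = Pm w * Pm w := by rw [hNNt, Matrix.mul_one]
        _ = 1 + gam w^2 • Matrix.vecMulVec w w := Pm_mul_Pm hw
    rw [hmid, Matrix.trace_smul, Matrix.trace_add, Matrix.trace_smul, Matrix.trace_one, trace_W]
    simp only [smul_eq_mul, Fintype.card_fin]
    linear_combination (t*t) * gam_sq3 hw
  have t4 := htr (s*e2) v O hq hO
  have t4' := htr (s'*e2') v' O' hq' hO'
  rw [E4', t4'] at t4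
  -- t4 : (s'*e2')^2 * (gam v'^2+2) = (s*e2)^2*(gam v^2+2)
  have k2 : s^2*(gam v^2+2) = s'^2*(gam v'^2+2) := by
    linear_combination -t4 - (s^2*(gam v^2+2))*he2sq + (s'^2*(gam v'^2+2))*he2sq'
  have hsum : s^2*e2^2*(gam v)^2*sq3 v = s'^2*e2'^2*(gam v')^2*sq3 v' := by
    have h0 := u3 0; have h1 := u3 1; have h2 := u3 2
    simp only [sq3]
    linear_combination (s*(e2*gam v*v 0) + s'*(e2'*gam v'*v' 0)) * h0
      + (s*(e2*gam v*v 1) + s'*(e2'*gam v'*v' 1)) * h1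
      + (s*(e2*gam v*v 2) + s'*(e2'*gam v'*v' 2)) * h2
  have k1 : s^2*(gam v^2-1) = s'^2*(gam v'^2-1) := by
    linear_combination hsum - (s^2*gam v^2*sq3 v) * he2sq - s^2 * hgq
      + (s'^2*gam v'^2*sq3 v') * he2sq' + s'^2 * hgq'
  have hss : s = s' := by
    have h3 : (s - s')*(s + s') = 0 := by linear_combination (k2 - k1)/3
    rcases mul_eq_zero.mp h3 with h | h
    · linarith
    · linarith
  subst hss
  have hgv0 : (0:ℝ) < gam v := by linarith
  have hgv0' : (0:ℝ) < gam v' := by linarith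
  have hge : gam v = gam v' := by
    have hs2 : (s:ℝ)^2 ≠ 0 := by positivity
    have h2 : gam v^2 = gam v'^2 :=
      mul_left_cancel₀ hs2 (by linear_combination k1)
    have h3 : (gam v - gam v')*(gam v + gam v') = 0 := by linear_combination h2
    rcases mul_eq_zero.mp h3 with h | h
    · linarith
    · linarith
  have he1e : e1 = e1' := by
    rw [← hge] at u1
    have hsg : s * gam v ≠ 0 := by positivity
    exact mul_left_cancel₀ hsg (by linear_combination u1)
  have k3 : (s*e2)^3 * gam v = (s*e2')^3 * gam v' := by
    have hdet := congrArg Matrix.det E4'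
    rw [Matrix.det_smul, Matrix.det_smul, Matrix.det_mul, Matrix.det_mul,
      det_Pm hq, det_Pm hq', hO.2, hO'.2] at hdet
    simpa only [Fintype.card_fin, mul_one] using hdet
  rw [← hge] at k3
  have he2e : e2 = e2' := by
    have hsg3 : s^3 * gam v ≠ 0 := by positivity
    have hcube : e2^3 = e2'^3 :=
      mul_left_cancel₀ hsg3 (by linear_combination k3)
    rcases he2 with h|h <;> rcases he2' with h'|h' <;> rw [h, h'] at hcube ⊢ <;>
      first
      | rfl
      | (exfalso; norm_num at hcube)
  have he2ne : e2 ≠ 0 := by rcases he2 with h|h <;> rw [h] <;> norm_num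
  have hvv : v = v' := by
    funext i
    have h := u3 i
    rw [← hge, ← he2e] at h
    have h2 : (s*e2*gam v) * v i = (s*e2*gam v) * v' i := by linear_combination h
    exact mul_left_cancel₀ (by positivity) h2
  rw [← he2e, ← hvv] at E4'
  have hPO : Pm v * O = Pm v * O' :=
    smul_right_injective (Matrix (Fin 3) (Fin 3) ℝ) (by positivity) E4'
  have hOO : O = O' := by
    have h := congrArg (fun X => Qm v * X) hPO
    simpa only [← Matrix.mul_assoc, Qm_mul_Pm hq, Matrix.one_mul] using h
  exact ⟨rfl, hvv, hOO, he1e, he2e⟩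

lemma isLorentz_neg {B : Matrix (Fin 4) (Fin 4) ℝ} (hB : IsLorentz B) : IsLorentz (-B) := by
  intro x
  rw [Matrix.neg_mulVec]
  have h := hB x
  simp only [mink, Pi.neg_apply, neg_sq] at h ⊢
  exact h


/-- Any scaled Lorentz transformation can be written uniquely as s·lorentzForm ε₁ ε₂ v O
with s > 0, |v| < 1, O ∈ SO(3,ℝ) and ε₁, ε₂ ∈ {−1,1}. -/
theorem scaled_lorentz_decomposition (A : Matrix (Fin 4) (Fin 4) ℝ)
    (hA : IsScaledLorentz A) :
    ∃! p : ℝ × (Fin 3 → ℝ) × Matrix (Fin 3) (Fin 3) ℝ × ℝ × ℝ,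
      0 < p.1 ∧ Real.sqrt (sq3 p.2.1) < 1 ∧ SO3 p.2.2.1 ∧
      (p.2.2.2.1 = 1 ∨ p.2.2.2.1 = -1) ∧ (p.2.2.2.2 = 1 ∨ p.2.2.2.2 = -1) ∧
      A = p.1 • lorentzForm p.2.2.2.1 p.2.2.2.2 p.2.1 p.2.2.1 := by

  obtain ⟨s0, hs0, B, hB, rfl⟩ := hA
  obtain ⟨s, B', hspos, hB', hAeq⟩ : ∃ (s : ℝ) (B' : Matrix (Fin 4) (Fin 4) ℝ), 0 < s ∧ IsLorentz B' ∧ s0 • B = s • B' := by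
    rcases lt_or_gt_of_ne hs0 with h | h
    · exact ⟨-s0, -B, by linarith, isLorentz_neg hB, by rw [smul_neg, neg_smul, neg_neg]⟩
    · exact ⟨s0, B, h, hB, rfl⟩
  obtain ⟨v, O, e1, e2, hsq, hSO, he1, he2, hform⟩ := lorentz_form_exists hB'
  refine ⟨(s, v, O, e1, e2), ⟨hspos, hsq, hSO, he1, he2, by rw [hAeq, hform]⟩, ?_⟩
  rintro ⟨s', v', O', e1', e2'⟩ ⟨hs', hsq', hSO', he1', he2', hform'⟩
  dsimp only at hs' hsq' hSO' he1' he2' hform'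
  have heq : s' • lorentzForm e1' e2' v' O' = s • lorentzForm e1 e2 v O := by
    rw [← hform', hAeq, hform]
  obtain ⟨h1, h2, h3, h4, h5⟩ :=
    lorentz_form_unique hs' hspos hsq' hsq hSO' hSO he1' he1 he2' he2 heq
  simp only [Prod.mk.injEq]
  exact ⟨h1, h2, h3, h4, h5⟩
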